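/- Let f : ℝⁿ × ℝ → ℝ be C^{k+1} with invertible Hessian in y everywhere, and let y : ℝ → ℝⁿ be a C^k trajectory whose k-th derivative equals the implicit planning law y^{(k)} = ∇_{yy}f⁻¹ [Σ_{i=0}^{k−1} a_i ∇_y^{(i)} f − Σ_{m=1}^{k−1} C(k−1,m) ∇_{yy}^{(m)} f · y^{(k−m)} − ∇_{yt}^{(k−1)} f], where ∇_y^{(i)} f denotes the i-th total time derivative of ∇_y f(y(t),t). Then g(t) := ∇_y f(y(t),t) satisfies the k-th order linear ODE g^{(k)}(t) = Σ_{i=0}^{k−1} a_i g^{(i)}(t). -/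

import Mathlib

open Finset

lemma pascal_sum_aux {V : Type*} [AddCommGroup V] [Module ℝ V] (j : ℕ) (T : ℕ → V) :
    ∑ m ∈ Finset.range (j + 2), (((j + 1).choose m : ℕ) : ℝ) • T m
      = ∑ m ∈ Finset.range (j + 1), ((j.choose m : ℕ) : ℝ) • (T (m + 1) + T m) := by
  have h2 : ∑ m ∈ Finset.range (j + 2), ((j.choose m : ℕ) : ℝ) • T m
      = ∑ m ∈ Finset.range (j + 1), ((j.choose (m + 1) : ℕ) : ℝ) • T (m + 1)
        + ((j.choose 0 : ℕ) : ℝ) • T 0 := Finset.sum_range_succ' _ _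
  rw [Finset.sum_range_succ, Nat.choose_succ_self] at h2
  simp only [Nat.cast_zero, zero_smul, add_zero, Nat.choose_zero_right, Nat.cast_one,
    one_smul] at h2
  rw [Finset.sum_range_succ']
  simp only [Nat.choose_succ_succ, Nat.cast_add, add_smul, smul_add, Nat.choose_zero_right,
    Nat.cast_one, one_smul]
  rw [Finset.sum_add_distrib, Finset.sum_add_distrib]
  simp only [Nat.succ_eq_add_one]
  rw [h2]
  abel

lemma leibniz_clm_apply {E F : Type*} [NormedAddCommGroup E] [NormedSpace ℝ E]
    [NormedAddCommGroup F] [NormedSpace ℝ F]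
    (N : ℕ) (A : ℝ → E →L[ℝ] F) (v : ℝ → E) (hA : ContDiff ℝ N A) (hv : ContDiff ℝ N v) :
    ∀ j, j ≤ N → ∀ t : ℝ, iteratedDeriv j (fun s => A s (v s)) t
      = ∑ m ∈ Finset.range (j + 1), ((j.choose m : ℕ) : ℝ) •
          (iteratedDeriv m A t) (iteratedDeriv (j - m) v t) := by
  intro j
  induction j with
  | zero => intro _ t; simp
  | succ j ih =>
    intro hj t
    have hAd : ∀ m, m ≤ j → DifferentiableAt ℝ (iteratedDeriv m A) t := fun m hm =>
      (hA.differentiable_iteratedDeriv m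
        (by exact_mod_cast Nat.lt_of_lt_of_le (Nat.lt_succ_of_le hm) hj)).differentiableAt
    have hvd : ∀ m, m ≤ j → DifferentiableAt ℝ (iteratedDeriv m v) t := fun m hm =>
      (hv.differentiable_iteratedDeriv m
        (by exact_mod_cast Nat.lt_of_lt_of_le (Nat.lt_succ_of_le hm) hj)).differentiableAt
    have hfun : iteratedDeriv j (fun s => A s (v s))
        = fun s => ∑ m ∈ Finset.range (j + 1), ((j.choose m : ℕ) : ℝ) •
            (iteratedDeriv m A s) (iteratedDeriv (j - m) v s) :=
      funext fun s => ih (Nat.le_of_succ_le hj) s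
    have hdiffs : ∀ m ∈ Finset.range (j + 1), DifferentiableAt ℝ
        (fun s => ((j.choose m : ℕ) : ℝ) •
          (iteratedDeriv m A s) (iteratedDeriv (j - m) v s)) t := by
      intro m hm
      have hmj : m ≤ j := Nat.lt_succ_iff.mp (Finset.mem_range.mp hm)
      exact (((hAd m hmj).clm_apply (hvd (j - m) (Nat.sub_le j m)))).const_smul _
    have hterm : ∀ m ∈ Finset.range (j + 1),
        deriv (fun s => ((j.choose m : ℕ) : ℝ) •
          (iteratedDeriv m A s) (iteratedDeriv (j - m) v s)) t
        = ((j.choose m : ℕ) : ℝ) •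
            ((iteratedDeriv (m + 1) A t) (iteratedDeriv (j + 1 - (m + 1)) v t)
              + (iteratedDeriv m A t) (iteratedDeriv (j + 1 - m) v t)) := by
      intro m hm
      have hmj : m ≤ j := Nat.lt_succ_iff.mp (Finset.mem_range.mp hm)
      rw [show j + 1 - (m + 1) = j - m from by omega,
        show j + 1 - m = j - m + 1 from by omega,
        deriv_fun_const_smul _ ((hAd m hmj).clm_apply (hvd (j - m) (Nat.sub_le j m))),
        deriv_clm_apply (hAd m hmj) (hvd (j - m) (Nat.sub_le j m)),
        ← iteratedDeriv_succ, ← iteratedDeriv_succ]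
    rw [iteratedDeriv_succ, hfun, deriv_fun_sum hdiffs, Finset.sum_congr rfl hterm]
    exact (pascal_sum_aux j
      (fun m => (iteratedDeriv m A t) (iteratedDeriv (j + 1 - m) v t))).symm

lemma iteratedDeriv_add_apply'' {F : Type*} [NormedAddCommGroup F] [NormedSpace ℝ F]
    {i : ℕ} {f g : ℝ → F} (hf : ContDiff ℝ i f) (hg : ContDiff ℝ i g) (t : ℝ) :
    iteratedDeriv i (fun s => f s + g s) t = iteratedDeriv i f t + iteratedDeriv i g t := by
  simp only [iteratedDeriv_eq_iteratedFDeriv]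
  rw [iteratedFDeriv_add_apply' hf.contDiffAt hg.contDiffAt]
  simp

/-- Implicit trajectory planning: if the `k`-th derivative of the trajectory `y` equals the
implicit planning law
`y^{(k)} = ∇_{yy}f⁻¹ [ ∑_{i<k} a_i ∇_y^{(i)} f − ∑_{m=1}^{k−1} C(k−1,m) ∇_{yy}^{(m)} f · y^{(k−m)} − ∇_{yt}^{(k−1)} f ]`,
then the gradient `g(t) = ∇_y f(y(t),t)` satisfies the `k`-th order linear ODE
`g^{(k)} = ∑_{i<k} a_i g^{(i)}`. -/
theorem implicit_planning_gradient_ode {n k : ℕ} (hk : 1 ≤ k) (a : ℕ → ℝ)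
    (f : EuclideanSpace ℝ (Fin n) × ℝ → ℝ) (hf : ContDiff ℝ (k + 1 : ℕ) f)
    (y : ℝ → EuclideanSpace ℝ (Fin n)) (hy : ContDiff ℝ (k : ℕ) y)
    (grad : EuclideanSpace ℝ (Fin n) → ℝ → EuclideanSpace ℝ (Fin n))
    (hgrad : ∀ z t, grad z t = gradient (fun w => f (w, t)) z)
    (Hess : EuclideanSpace ℝ (Fin n) → ℝ →
      (EuclideanSpace ℝ (Fin n) →L[ℝ] EuclideanSpace ℝ (Fin n)))
    (hHess : ∀ z t, Hess z t = fderiv ℝ (fun w => grad w t) z)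
    (mixed : EuclideanSpace ℝ (Fin n) → ℝ → EuclideanSpace ℝ (Fin n))
    (hmixed : ∀ z t, mixed z t = deriv (fun s => grad z s) t)
    -- the (everywhere defined) inverse of the Hessian
    (Hinv : EuclideanSpace ℝ (Fin n) → ℝ →
      (EuclideanSpace ℝ (Fin n) →L[ℝ] EuclideanSpace ℝ (Fin n)))
    (hHinv : ∀ z t, (Hess z t).comp (Hinv z t)
        = ContinuousLinearMap.id ℝ (EuclideanSpace ℝ (Fin n)) ∧
      (Hinv z t).comp (Hess z t) = ContinuousLinearMap.id ℝ (EuclideanSpace ℝ (Fin n)))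
    -- the implicit planning law for `y^{(k)}`
    (hplan : ∀ t : ℝ, iteratedDeriv k y t =
      Hinv (y t) t
        ((∑ i ∈ Finset.range k, a i • iteratedDeriv i (fun s => grad (y s) s) t)
          - (∑ m ∈ Finset.Ico 1 k, ((k - 1).choose m : ℝ) •
              (iteratedDeriv m (fun s => Hess (y s) s) t) (iteratedDeriv (k - m) y t))
          - iteratedDeriv (k - 1) (fun s => mixed (y s) s) t)) :
    ∀ t : ℝ, iteratedDeriv k (fun s => grad (y s) s) t
      = ∑ i ∈ Finset.range k, a i • iteratedDeriv i (fun s => grad (y s) s) t := by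
  intro t
  have hk1 : k - 1 + 1 = k := Nat.succ_pred_eq_of_pos hk
  have hfd : Differentiable ℝ f := hf.differentiable (by exact_mod_cast Nat.succ_ne_zero k)
  have hinl : ∀ (z : EuclideanSpace ℝ (Fin n)) (t' : ℝ),
      HasFDerivAt (fun w : EuclideanSpace ℝ (Fin n) => (w, t'))
        (ContinuousLinearMap.inl ℝ (EuclideanSpace ℝ (Fin n)) ℝ) z := fun z t' =>
    (hasFDerivAt_id z).prodMk (hasFDerivAt_const t' z)
  -- the joint gradient map
  have hGeq : ∀ (z : EuclideanSpace ℝ (Fin n)) (t' : ℝ),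
      grad z t' = (InnerProductSpace.toDual ℝ (EuclideanSpace ℝ (Fin n))).symm
        ((fderiv ℝ f (z, t')).comp
          (ContinuousLinearMap.inl ℝ (EuclideanSpace ℝ (Fin n)) ℝ)) := by
    intro z t'
    rw [hgrad]
    unfold gradient
    congr 1
    exact (((hfd (z, t')).hasFDerivAt).comp z (hinl z t')).fderiv
  have hGC : ContDiff ℝ (k : ℕ)
      (fun p : EuclideanSpace ℝ (Fin n) × ℝ => grad p.1 p.2) := by
    have h1 : ContDiff ℝ (k : ℕ) (fderiv ℝ f) := hf.fderiv_right (by norm_cast)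
    have h1' : ContDiff ℝ (k : ℕ) (fun p : EuclideanSpace ℝ (Fin n) × ℝ =>
        (fderiv ℝ f p).comp (ContinuousLinearMap.inl ℝ (EuclideanSpace ℝ (Fin n)) ℝ)) :=
      h1.clm_comp contDiff_const
    have h2 := ((InnerProductSpace.toDual ℝ
        (EuclideanSpace ℝ (Fin n))).symm.contDiff (n := (k : ℕ))).comp h1'
    have heq : (fun p : EuclideanSpace ℝ (Fin n) × ℝ => grad p.1 p.2)
        = fun p => (InnerProductSpace.toDual ℝ (EuclideanSpace ℝ (Fin n))).symm
            ((fderiv ℝ f p).comp (ContinuousLinearMap.inl ℝ (EuclideanSpace ℝ (Fin n)) ℝ)) :=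
      funext fun p => hGeq p.1 p.2
    rw [heq]
    exact h2
  have hGdiff : Differentiable ℝ (fun p : EuclideanSpace ℝ (Fin n) × ℝ => grad p.1 p.2) :=
    hGC.differentiable (by exact_mod_cast Nat.one_le_iff_ne_zero.mp hk)
  have hHessG : ∀ (z : EuclideanSpace ℝ (Fin n)) (t' : ℝ),
      Hess z t' = (fderiv ℝ (fun p : EuclideanSpace ℝ (Fin n) × ℝ => grad p.1 p.2)
          (z, t')).comp (ContinuousLinearMap.inl ℝ (EuclideanSpace ℝ (Fin n)) ℝ) := by
    intro z t'
    rw [hHess]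
    exact (((hGdiff (z, t')).hasFDerivAt).comp z (hinl z t')).fderiv
  have hmixedG : ∀ (z : EuclideanSpace ℝ (Fin n)) (t' : ℝ),
      mixed z t' = (fderiv ℝ (fun p : EuclideanSpace ℝ (Fin n) × ℝ => grad p.1 p.2)
          (z, t')) (0, 1) := by
    intro z t'
    rw [hmixed]
    have hcur : HasDerivAt (fun s : ℝ => ((z, s) : EuclideanSpace ℝ (Fin n) × ℝ))
        ((0 : EuclideanSpace ℝ (Fin n)), (1 : ℝ)) t' :=
      (hasDerivAt_const t' z).prodMk (hasDerivAt_id t')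
    exact (((hGdiff (z, t')).hasFDerivAt).comp_hasDerivAt t' hcur).deriv
  have hfderivG : ContDiff ℝ ((k - 1 : ℕ))
      (fderiv ℝ (fun p : EuclideanSpace ℝ (Fin n) × ℝ => grad p.1 p.2)) :=
    hGC.fderiv_right (by exact_mod_cast hk1.le)
  have hHJ : ContDiff ℝ ((k - 1 : ℕ))
      (fun p : EuclideanSpace ℝ (Fin n) × ℝ => Hess p.1 p.2) := by
    have heq : (fun p : EuclideanSpace ℝ (Fin n) × ℝ => Hess p.1 p.2)
        = fun p => (fderiv ℝ (fun p : EuclideanSpace ℝ (Fin n) × ℝ => grad p.1 p.2) p).comp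
            (ContinuousLinearMap.inl ℝ (EuclideanSpace ℝ (Fin n)) ℝ) :=
      funext fun p => hHessG p.1 p.2
    rw [heq]
    exact hfderivG.clm_comp contDiff_const
  have hMJ : ContDiff ℝ ((k - 1 : ℕ))
      (fun p : EuclideanSpace ℝ (Fin n) × ℝ => mixed p.1 p.2) := by
    have heq : (fun p : EuclideanSpace ℝ (Fin n) × ℝ => mixed p.1 p.2)
        = fun p => (fderiv ℝ (fun p : EuclideanSpace ℝ (Fin n) × ℝ => grad p.1 p.2) p)
            (0, 1) := funext fun p => hmixedG p.1 p.2
    rw [heq]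
    exact hfderivG.clm_apply contDiff_const
  have hcv : ContDiff ℝ (k : ℕ)
      (fun s : ℝ => ((y s, s) : EuclideanSpace ℝ (Fin n) × ℝ)) := hy.prodMk contDiff_id
  have hH : ContDiff ℝ ((k - 1 : ℕ)) (fun s => Hess (y s) s) :=
    hHJ.comp (hcv.of_le (by exact_mod_cast Nat.sub_le k 1))
  have hM : ContDiff ℝ ((k - 1 : ℕ)) (fun s => mixed (y s) s) :=
    hMJ.comp (hcv.of_le (by exact_mod_cast Nat.sub_le k 1))
  have hydiff : Differentiable ℝ y := hy.differentiable (by exact_mod_cast Nat.one_le_iff_ne_zero.mp hk)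
  have hderivg : ∀ t' : ℝ, deriv (fun s => grad (y s) s) t'
      = Hess (y t') t' (deriv y t') + mixed (y t') t' := by
    intro t'
    have hcur : HasDerivAt (fun s : ℝ => ((y s, s) : EuclideanSpace ℝ (Fin n) × ℝ))
        (deriv y t', 1) t' := ((hydiff t').hasDerivAt).prodMk (hasDerivAt_id t')
    have h0 : HasDerivAt ((fun p : EuclideanSpace ℝ (Fin n) × ℝ => grad p.1 p.2)
          ∘ (fun s : ℝ => (y s, s)))
        ((fderiv ℝ (fun p : EuclideanSpace ℝ (Fin n) × ℝ => grad p.1 p.2) (y t', t'))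
          (deriv y t', 1)) t' :=
      HasFDerivAt.comp_hasDerivAt t' ((hGdiff (y t', t')).hasFDerivAt) hcur
    have h : HasDerivAt (fun s => grad (y s) s)
        ((fderiv ℝ (fun p : EuclideanSpace ℝ (Fin n) × ℝ => grad p.1 p.2) (y t', t'))
          (deriv y t', 1)) t' := h0
    rw [h.deriv, hHessG, hmixedG]
    rw [show ((deriv y t', (1 : ℝ)) : EuclideanSpace ℝ (Fin n) × ℝ)
        = ((deriv y t', 0) : EuclideanSpace ℝ (Fin n) × ℝ) + (0, 1) from by simp, map_add]
    simp
  have hy' : ContDiff ℝ ((k - 1 : ℕ)) (deriv y) := by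
    have hy2 : ContDiff ℝ (((k - 1 : ℕ) : WithTop ℕ∞) + 1) y := by
      have hcast : (((k - 1 : ℕ) : WithTop ℕ∞) + 1) = ((k : ℕ) : WithTop ℕ∞) := by
        exact_mod_cast congrArg (fun m : ℕ => ((m : WithTop ℕ∞))) hk1
      rw [hcast]
      exact hy
    exact (contDiff_succ_iff_deriv.mp hy2).2.2
  have hcomb : iteratedDeriv k (fun s => grad (y s) s) t
      = (∑ m ∈ Finset.range k, ((k - 1).choose m : ℝ) •
          (iteratedDeriv m (fun s => Hess (y s) s) t) (iteratedDeriv (k - m) y t))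
        + iteratedDeriv (k - 1) (fun s => mixed (y s) s) t := by
    have e1 : iteratedDeriv k (fun s => grad (y s) s)
        = iteratedDeriv (k - 1) (deriv (fun s => grad (y s) s)) := by
      conv_lhs => rw [← hk1]
      rw [iteratedDeriv_succ']
    have hdg : deriv (fun s => grad (y s) s)
        = fun s => Hess (y s) s (deriv y s) + mixed (y s) s := funext hderivg
    rw [e1, hdg, iteratedDeriv_add_apply'' (hH.clm_apply hy') hM t]
    congr 1
    rw [leibniz_clm_apply (k - 1) _ _ hH hy' (k - 1) le_rfl t, hk1]
    refine Finset.sum_congr rfl fun m hm => ?_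
    rw [show k - m = k - 1 - m + 1 from by
        have := Finset.mem_range.mp hm; omega, iteratedDeriv_succ']
  rw [Finset.range_eq_Ico, Finset.sum_eq_sum_Ico_succ_bot hk] at hcomb
  simp only [Nat.choose_zero_right, Nat.cast_one, one_smul, Nat.sub_zero, iteratedDeriv_zero,
    zero_add] at hcomb
  rw [hplan t] at hcomb
  have happly : ∀ v : EuclideanSpace ℝ (Fin n), Hess (y t) t (Hinv (y t) t v) = v := by
    intro v
    have h := congrArg (fun L : EuclideanSpace ℝ (Fin n) →L[ℝ] EuclideanSpace ℝ (Fin n) =>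
      L v) (hHinv (y t) t).1
    simpa using h
  rw [happly] at hcomb
  rw [hcomb]
  abel
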